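/- Let a, z ∈ 𝔻 and N ∈ ℕ ∪ {∞} with N ≥ 1. Then l_𝔻^N(a,z) = |Φ_a(z)|, where Φ_a(λ) = (a − λ)/(1 − conj(a)·λ). -/

import Mathlib

open Metric Set Filter
open Topology

noncomputable section

/-- `HoloDisc D φ` : `φ` is a holomorphic map from the unit disc `𝔻 ⊆ ℂ` into `D`. -/
def HoloDisc {E : Type*} [NormedAddCommGroup E] [NormedSpace ℂ E]
    (D : Set E) (φ : ℂ → E) : Prop :=
  DifferentiableOn ℂ φ (Metric.ball 0 1) ∧ Set.MapsTo φ (Metric.ball 0 1) D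

/-- The Lempert function `l_D(A,z)` with pole set `A`. -/
def lempert {E : Type*} [NormedAddCommGroup E] [NormedSpace ℂ E]
    (D : Set E) (A : Set E) (z : E) : ℝ :=
  sInf { p : ℝ | ∃ lam : A → ℂ, (∀ a, lam a ∈ Metric.ball (0:ℂ) 1) ∧
    (∃ φ : ℂ → E, HoloDisc D φ ∧ φ 0 = z ∧ ∀ a : A, φ (lam a) = (a : E)) ∧
    p = ∏' a : A, ‖lam a‖ }

/-- The function `l_D^N(a,z)`, `N ∈ ℕ ∪ {∞}` : the infimum of products `∏_{j=1}^N |λ_j|`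
over `N` pairwise distinct points of the disc which are sent to `a` by a holomorphic map
`φ : 𝔻 → D` with `φ(0) = z`. -/
def lemN {E : Type*} [NormedAddCommGroup E] [NormedSpace ℂ E]
    (D : Set E) (N : ℕ∞) (a z : E) : ℝ :=
  sInf { p : ℝ | ∃ lam : {j : ℕ // (j : ℕ∞) < N} → ℂ, Function.Injective lam ∧
    (∀ j, lam j ∈ Metric.ball (0:ℂ) 1) ∧
    (∃ φ : ℂ → E, HoloDisc D φ ∧ φ 0 = z ∧ ∀ j, φ (lam j) = a) ∧
    p = ∏' j, ‖lam j‖ }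

namespace LemNAux

/-- The Möbius factor `Φ_α(x) = (α - x)/(1 - conj α * x)`. -/
def mo (α x : ℂ) : ℂ := (α - x) / (1 - (starRingEnd ℂ) α * x)

lemma mem_ball_iff_abs {x : ℂ} : x ∈ ball (0:ℂ) 1 ↔ ‖x‖ < 1 := by
  simp [mem_ball, Complex.dist_eq]

lemma denom_ne {α x : ℂ} (hα : ‖α‖ < 1) (hx : ‖x‖ < 1) :
    1 - (starRingEnd ℂ) α * x ≠ 0 := by
  intro h
  have h1 : (1:ℂ) = (starRingEnd ℂ) α * x := by linear_combination h
  have := congrArg (‖·‖) h1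
  simp only [norm_one, norm_mul, Complex.norm_conj] at this
  nlinarith [norm_nonneg α, norm_nonneg x]

lemma denom_ne' {α x : ℂ} (hα : ‖α‖ < 1) (hx : ‖x‖ < 1) :
    1 - α * (starRingEnd ℂ) x ≠ 0 := by
  intro h; apply denom_ne hα hx
  have h2 := congrArg (starRingEnd ℂ) h
  simp only [map_sub, map_one, map_mul, Complex.conj_conj, map_zero] at h2
  linear_combination h2

lemma mo_zero (α : ℂ) : mo α 0 = α := by simp [mo]

lemma mo_self (α : ℂ) : mo α α = 0 := by simp [mo]

lemma mo_mo {α x : ℂ} (hα : ‖α‖ < 1) (hx : ‖x‖ < 1) :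
    mo α (mo α x) = x := by
  have hd := denom_ne hα hx
  have h0' := denom_ne' hα hα
  simp only [mo]
  have e1 : α - (α - x) / (1 - (starRingEnd ℂ) α * x)
      = x * (1 - α * (starRingEnd ℂ) α) / (1 - (starRingEnd ℂ) α * x) := by
    rw [eq_div_iff hd, sub_mul, div_mul_cancel₀ _ hd]; ring
  have e2 : 1 - (starRingEnd ℂ) α * ((α - x) / (1 - (starRingEnd ℂ) α * x))
      = (1 - α * (starRingEnd ℂ) α) / (1 - (starRingEnd ℂ) α * x) := by
    rw [eq_div_iff hd, sub_mul, one_mul, mul_assoc, div_mul_cancel₀ _ hd]; ring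
  rw [e1, e2, div_div_div_cancel_right₀ hd, mul_div_assoc, div_self h0', mul_one]

lemma mo_eq_zero_iff {α x : ℂ} (hα : ‖α‖ < 1) (hx : ‖x‖ < 1) :
    mo α x = 0 ↔ x = α := by
  have hd := denom_ne hα hx
  rw [mo, div_eq_zero_iff]
  constructor
  · rintro (h | h)
    · exact (sub_eq_zero.mp h).symm
    · exact absurd h hd
  · rintro rfl; left; ring

lemma abs_mo_lt_one {α x : ℂ} (hα : ‖α‖ < 1) (hx : ‖x‖ < 1) :
    ‖mo α x‖ < 1 := by
  have hd := denom_ne hα hx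
  rw [mo, norm_div, div_lt_one (norm_pos_iff.mpr hd)]
  have key : Complex.normSq (1 - (starRingEnd ℂ) α * x) - Complex.normSq (α - x)
      = (1 - Complex.normSq α) * (1 - Complex.normSq x) := by
    simp only [Complex.normSq_apply, Complex.sub_re, Complex.sub_im, Complex.mul_re,
      Complex.mul_im, Complex.one_re, Complex.one_im, Complex.conj_re, Complex.conj_im]
    ring
  have h1 : Complex.normSq α < 1 := by rw [← Complex.sq_norm]; nlinarith [norm_nonneg α]
  have h2 : Complex.normSq x < 1 := by rw [← Complex.sq_norm]; nlinarith [norm_nonneg x]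
  have h3 : Complex.normSq (α - x) < Complex.normSq (1 - (starRingEnd ℂ) α * x) := by nlinarith
  rw [← Complex.sq_norm, ← Complex.sq_norm] at h3
  exact lt_of_pow_lt_pow_left₀ 2 (norm_nonneg _) h3

lemma mo_comp_eq {c l w : ℂ} (hc : ‖c‖ < 1) (hl : ‖l‖ < 1)
    (hw : ‖w‖ < 1) :
    mo (mo c l) (mo c w)
      = (w - l) * (1 - c * (starRingEnd ℂ) l)
        / ((1 - (starRingEnd ℂ) c * l) * (1 - (starRingEnd ℂ) l * w)) := by
  have h1 := denom_ne hc hl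
  have h2 := denom_ne hc hw
  have h3 := denom_ne hl hw
  have h1' := denom_ne' hc hl
  have hcc' := denom_ne' hc hc
  simp only [mo, map_div₀, map_sub, map_one, map_mul, Complex.conj_conj]
  have e : 1 - ((starRingEnd ℂ) c - (starRingEnd ℂ) l) / (1 - c * (starRingEnd ℂ) l)
        * ((c - w) / (1 - (starRingEnd ℂ) c * w))
      = ((1 - c * (starRingEnd ℂ) c) * (1 - (starRingEnd ℂ) l * w))
        / ((1 - c * (starRingEnd ℂ) l) * (1 - (starRingEnd ℂ) c * w)) := by
    rw [div_mul_div_comm, eq_div_iff (mul_ne_zero h1' h2), sub_mul, one_mul,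
      div_mul_cancel₀ _ (mul_ne_zero h1' h2)]
    ring
  rw [e]
  rw [div_sub_div _ _ h1 h2, div_div_div_eq, div_eq_div_iff (by positivity) (by positivity)]
  ring

lemma abs_mo_invar {c l w : ℂ} (hc : ‖c‖ < 1) (hl : ‖l‖ < 1)
    (hw : ‖w‖ < 1) :
    ‖mo (mo c l) (mo c w)‖ = ‖mo l w‖ := by
  rw [mo_comp_eq hc hl hw, mo]
  rw [norm_div, norm_div, norm_mul, norm_mul]
  have e1 : ‖1 - c * (starRingEnd ℂ) l‖
      = ‖1 - (starRingEnd ℂ) c * l‖ := by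
    rw [← Complex.norm_conj (1 - (starRingEnd ℂ) c * l)]
    congr 1
    simp only [map_sub, map_one, map_mul, Complex.conj_conj]
  have e2 : ‖w - l‖ = ‖l - w‖ := norm_sub_rev w l
  rw [e1, e2]
  have h1 := norm_pos_iff.mpr (denom_ne hc hl)
  rw [mul_comm (‖1 - (starRingEnd ℂ) c * l‖) (‖1 - (starRingEnd ℂ) l * w‖),
    mul_div_mul_right _ _ h1.ne']

/-- `x ↦ mo α (f x)` is differentiable on `s` when `f` is and maps into the disc. -/
lemma mo_comp_differentiableOn {α : ℂ} (hα : ‖α‖ < 1) {f : ℂ → ℂ} {s : Set ℂ}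
    (hf : DifferentiableOn ℂ f s) (hmaps : ∀ x ∈ s, ‖f x‖ < 1) :
    DifferentiableOn ℂ (fun x => mo α (f x)) s := by
  apply DifferentiableOn.div
  · exact (differentiableOn_const α).sub hf
  · exact (differentiableOn_const 1).sub ((differentiableOn_const _).mul hf)
  · intro x hx
    exact denom_ne hα (hmaps x hx)

lemma blaschke_bound : ∀ (n : ℕ) (s : Finset ℂ), s.card = n →
    ∀ f : ℂ → ℂ, DifferentiableOn ℂ f (ball 0 1) →
    MapsTo f (ball 0 1) (closedBall 0 1) →
    (∀ x ∈ s, x ∈ ball (0:ℂ) 1) → (∀ x ∈ s, f x = 0) →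
    ∀ w ∈ ball (0:ℂ) 1, ‖f w‖ ≤ ∏ x ∈ s, ‖mo x w‖ := by
  classical
  intro n
  induction n with
  | zero =>
    intro s hcard f _ hmaps _ _ w hw
    rw [Finset.card_eq_zero.mp hcard]
    simpa using mem_closedBall_zero_iff.mp (hmaps hw)
  | succ n IH =>
    intro s hcard f hdiff hmaps hmem hzero w hw
    obtain ⟨c, hc⟩ : s.Nonempty := Finset.card_pos.mp (by omega)
    set t : Finset ℂ := s.erase c with ht
    have htcard : t.card = n := by
      rw [ht, Finset.card_erase_of_mem hc, hcard]
      omega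
    have hcball : ‖c‖ < 1 := mem_ball_iff_abs.mp (hmem c hc)
    have hwa : ‖w‖ < 1 := mem_ball_iff_abs.mp hw
    have htmem : ∀ x ∈ t, ‖x‖ < 1 := fun x hx =>
      mem_ball_iff_abs.mp (hmem x (Finset.mem_of_mem_erase hx))
    set h : ℂ → ℂ := fun x => f (mo c x) with hh
    have hmomaps : MapsTo (fun x => mo c x) (ball (0:ℂ) 1) (ball (0:ℂ) 1) := by
      intro x hx
      exact mem_ball_iff_abs.mpr (abs_mo_lt_one hcball (mem_ball_iff_abs.mp hx))
    have hmodiff : DifferentiableOn ℂ (fun x => mo c x) (ball (0:ℂ) 1) := by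
      have := mo_comp_differentiableOn hcball (differentiableOn_id (𝕜 := ℂ))
        (fun x hx => mem_ball_iff_abs.mp hx)
      simpa using this
    have hhdiff : DifferentiableOn ℂ h (ball 0 1) := hdiff.comp hmodiff hmomaps
    have hh0 : h 0 = 0 := by
      simp only [hh, mo_zero]
      exact hzero c hc
    set g : ℂ → ℂ := dslope h 0 with hg
    have hgdiff : DifferentiableOn ℂ g (ball 0 1) :=
      (Complex.differentiableOn_dslope (ball_mem_nhds 0 one_pos)).mpr hhdiff
    have hgbound : ∀ x ∈ ball (0:ℂ) 1, ‖g x‖ ≤ 1 := by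
      intro x hx
      by_contra hcon
      push_neg at hcon
      have hR : (1:ℝ) < (1 + ‖g x‖) / 2 := by linarith
      have hmaps' : MapsTo h (ball 0 1) (closedBall (h 0) ((1 + ‖g x‖) / 2)) := by
        intro y hy
        rw [hh0]
        have := mem_closedBall_zero_iff.mp (hmaps (hmomaps hy))
        rw [mem_closedBall_zero_iff]
        calc ‖f (mo c y)‖ ≤ 1 := this
        _ ≤ _ := hR.le
      have := Complex.norm_dslope_le_div_of_mapsTo_ball hhdiff hmaps' hx
      rw [div_one] at this
      simp only [← hg] at this
      linarith
    have hgmaps : MapsTo g (ball (0:ℂ) 1) (closedBall (0:ℂ) 1) := by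
      intro x hx
      exact mem_closedBall_zero_iff.mpr (hgbound x hx)
    have hval : ∀ y ∈ ball (0:ℂ) 1, h y = y * g y := by
      intro y _
      have := sub_smul_dslope h 0 y
      simp only [sub_zero, smul_eq_mul, hh0] at this
      rw [hg, ← this]
    have hinj : Set.InjOn (fun x => mo c x) t := by
      intro x hx y hy hxy
      have := congrArg (mo c) hxy
      rwa [mo_mo hcball (htmem x hx), mo_mo hcball (htmem y hy)] at this
    have himgcard : (t.image (fun x => mo c x)).card = n := by
      rw [Finset.card_image_of_injOn hinj, htcard]
    have himg_mem : ∀ y ∈ t.image (fun x => mo c x), y ∈ ball (0:ℂ) 1 := by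
      intro y hy
      rcases Finset.mem_image.mp hy with ⟨x, hx, rfl⟩
      exact mem_ball_iff_abs.mpr (abs_mo_lt_one hcball (htmem x hx))
    have himg_zero : ∀ y ∈ t.image (fun x => mo c x), g y = 0 := by
      intro y hy
      rcases Finset.mem_image.mp hy with ⟨x, hx, rfl⟩
      have hne : mo c x ≠ 0 := by
        rw [Ne, mo_eq_zero_iff hcball (htmem x hx)]
        rintro rfl
        exact (Finset.ne_of_mem_erase hx) rfl
      have hy0 : h (mo c x) = 0 := by
        simp only [hh, mo_mo hcball (htmem x hx)]
        exact hzero x (Finset.mem_of_mem_erase hx)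
      rw [hg, dslope_of_ne h hne, slope_def_field, hh0, sub_zero, sub_zero, hy0, zero_div]
    have hIH := IH _ himgcard g hgdiff hgmaps himg_mem himg_zero (mo c w)
      (mem_ball_iff_abs.mpr (abs_mo_lt_one hcball hwa))
    rw [Finset.prod_image hinj] at hIH
    have hprod_eq : ∏ x ∈ t, ‖mo (mo c x) (mo c w)‖
        = ∏ x ∈ t, ‖mo x w‖ := by
      apply Finset.prod_congr rfl
      intro x hx
      exact abs_mo_invar hcball (htmem x hx) hwa
    rw [hprod_eq] at hIH
    have hfw : f w = mo c w * g (mo c w) := by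
      have h1 : f w = h (mo c w) := by simp only [hh, mo_mo hcball hwa]
      rw [h1, hval (mo c w) (mem_ball_iff_abs.mpr (abs_mo_lt_one hcball hwa))]
    rw [← Finset.mul_prod_erase s _ hc, hfw, norm_mul]
    exact mul_le_mul_of_nonneg_left hIH (norm_nonneg _)

lemma hasProd_of_le_one {ι : Type*} (f : ι → ℝ) (h0 : ∀ i, 0 ≤ f i) (h1 : ∀ i, f i ≤ 1) :
    HasProd f (⨅ s : Finset ι, ∏ i ∈ s, f i) := by
  classical
  have hanti : Antitone (fun s : Finset ι => ∏ i ∈ s, f i) := by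
    intro s t hst
    simp only
    have := Finset.prod_sdiff hst (f := f)
    rw [← this]
    have h2 : ∏ i ∈ t \ s, f i ≤ 1 := Finset.prod_le_one (fun i _ => h0 i) (fun i _ => h1 i)
    have h3 : 0 ≤ ∏ i ∈ s, f i := Finset.prod_nonneg (fun i _ => h0 i)
    nlinarith
  exact tendsto_atTop_ciInf hanti
    ⟨0, by rintro x ⟨s, rfl⟩; exact Finset.prod_nonneg (fun i _ => h0 i)⟩

lemma tprod_le_single {ι : Type*} (f : ι → ℝ) (i0 : ι) (h0 : ∀ i, 0 ≤ f i) (h1 : ∀ i, f i ≤ 1) :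
    ∏' i, f i ≤ f i0 := by
  rw [(hasProd_of_le_one f h0 h1).tprod_eq]
  have : (⨅ s : Finset ι, ∏ i ∈ s, f i) ≤ ∏ i ∈ ({i0} : Finset ι), f i :=
    ciInf_le ⟨0, by rintro x ⟨s, rfl⟩; exact Finset.prod_nonneg (fun i _ => h0 i)⟩ _
  simpa using this

lemma le_tprod_of_finset {ι : Type*} (f : ι → ℝ) (r : ℝ) (hr1 : r ≤ 1)
    (hr : ∀ s : Finset ι, r ≤ ∏ i ∈ s, f i) : r ≤ ∏' i, f i := by
  by_cases hm : Multipliable f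
  · exact ge_of_tendsto' hm.hasProd hr
  · rw [tprod_eq_one_of_not_multipliable hm]; exact hr1

lemma hasProd_zero_of_eq_zero {ι : Type*} (f : ι → ℝ) (i0 : ι) (h : f i0 = 0) :
    HasProd f 0 := by
  have hev : ∀ᶠ s : Finset ι in atTop, ∏ i ∈ s, f i = 0 := by
    filter_upwards [eventually_ge_atTop ({i0} : Finset ι)] with s hs
    exact Finset.prod_eq_zero (hs (Finset.mem_singleton_self i0)) h
  exact Tendsto.congr' (by filter_upwards [hev] with s hs using hs.symm) tendsto_const_nhds

/-- Cayley-type transform sending the left half plane into the unit disc. -/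
def cay (μ : ℂ) : ℂ := (μ + 1) / (μ - 1)

lemma cay_ne_one_denom {μ : ℂ} (h : μ.re < 0) : μ - 1 ≠ 0 := by
  intro hc
  have := congrArg Complex.re hc
  simp only [Complex.sub_re, Complex.one_re, Complex.zero_re] at this
  linarith

lemma cay_arg {μ : ℂ} (h1 : μ ≠ 1) : (cay μ + 1) / (cay μ - 1) = μ := by
  have hne : μ - 1 ≠ 0 := sub_ne_zero.mpr h1
  have e1 : cay μ + 1 = 2*μ/(μ-1) := by rw [cay, div_add_one hne]; congr 1; ring
  have e2 : cay μ - 1 = 2/(μ-1) := by rw [cay, div_sub_one hne]; congr 1; ring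
  rw [e1, e2, div_eq_iff (div_ne_zero two_ne_zero hne)]
  field_simp

lemma cay_abs_lt_one {μ : ℂ} (h : μ.re < 0) : ‖cay μ‖ < 1 := by
  have hne := cay_ne_one_denom h
  rw [cay, norm_div, div_lt_one (norm_pos_iff.mpr hne)]
  have h3 : Complex.normSq (μ + 1) < Complex.normSq (μ - 1) := by
    simp only [Complex.normSq_apply, Complex.add_re, Complex.add_im, Complex.sub_re,
      Complex.sub_im, Complex.one_re, Complex.one_im]
    nlinarith
  rw [← Complex.sq_norm, ← Complex.sq_norm] at h3
  exact lt_of_pow_lt_pow_left₀ 2 (norm_nonneg _) h3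

lemma cay_abs_ge {μ : ℂ} (h0 : μ.re < 0) (h1 : -1 ≤ μ.re) :
    (1 + μ.re) / (1 - μ.re) ≤ ‖cay μ‖ := by
  have hne := cay_ne_one_denom h0
  have hnsq : 0 < Complex.normSq (μ - 1) := Complex.normSq_pos.mpr hne
  have hsq : ((1 + μ.re) / (1 - μ.re))^2 ≤ ‖cay μ‖^2 := by
    rw [Complex.sq_norm, cay, Complex.normSq_div, div_pow,
      div_le_div_iff₀ (pow_pos (by linarith) 2) hnsq]
    simp only [Complex.normSq_apply, Complex.add_re, Complex.add_im, Complex.sub_re,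
      Complex.sub_im, Complex.one_re, Complex.one_im]
    nlinarith [sq_nonneg μ.im, mul_nonneg (neg_nonneg.mpr h0.le) (sq_nonneg μ.im)]
  exact le_of_pow_le_pow_left₀ (by norm_num) (norm_nonneg _) hsq

lemma cay_inj {μ μ' : ℂ} (h1 : μ ≠ 1) (h2 : μ' ≠ 1) (h : cay μ = cay μ') : μ = μ' := by
  rw [cay, cay, div_eq_div_iff (sub_ne_zero.mpr h1) (sub_ne_zero.mpr h2)] at h
  linear_combination -h / 2

lemma re_pre_neg {x : ℂ} (hx : ‖x‖ < 1) : ((x + 1) / (x - 1)).re < 0 := by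
  have hx1 : x - 1 ≠ 0 := by
    intro h
    rw [sub_eq_zero] at h
    rw [h] at hx
    simp at hx
  rw [Complex.div_re]
  have hnsq : 0 < Complex.normSq (x - 1) := Complex.normSq_pos.mpr hx1
  rw [← add_div, div_neg_iff]
  right
  refine ⟨?_, hnsq⟩
  simp only [Complex.add_re, Complex.add_im, Complex.sub_re, Complex.sub_im,
    Complex.one_re, Complex.one_im]
  have hlt : Complex.normSq x < 1 := by
    rw [← Complex.sq_norm]
    nlinarith [norm_nonneg x]
  rw [Complex.normSq_apply] at hlt
  nlinarith

end LemNAux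

open LemNAux

/-- For `a, z ∈ 𝔻` and `N ∈ ℕ ∪ {∞}` with `N ≥ 1`,
`l_𝔻^N(a,z) = |Φ_a(z)|` where `Φ_a(λ) = (a - λ)/(1 - conj(a)·λ)`. -/
theorem lemN_disc_formula (a z : ℂ) (ha : a ∈ Metric.ball (0:ℂ) 1)
    (hz : z ∈ Metric.ball (0:ℂ) 1) (N : ℕ∞) (hN : 1 ≤ N) :
    lemN (Metric.ball (0:ℂ) 1) N a z =
      ‖(a - z) / (1 - (starRingEnd ℂ) a * z)‖ := by
  classical
  have haa : ‖a‖ < 1 := mem_ball_iff_abs.mp ha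
  have hza : ‖z‖ < 1 := mem_ball_iff_abs.mp hz
  set r : ℝ := ‖mo a z‖ with hrdef
  have hgoal_r : ‖(a - z) / (1 - (starRingEnd ℂ) a * z)‖ = r := rfl
  have hr1 : r < 1 := abs_mo_lt_one haa hza
  have hr0 : 0 ≤ r := norm_nonneg _
  rw [hgoal_r, lemN]
  set S : Set ℝ := { p : ℝ | ∃ lam : {j : ℕ // (j : ℕ∞) < N} → ℂ, Function.Injective lam ∧
    (∀ j, lam j ∈ Metric.ball (0:ℂ) 1) ∧
    (∃ φ : ℂ → ℂ, HoloDisc (Metric.ball (0:ℂ) 1) φ ∧ φ 0 = z ∧ ∀ j, φ (lam j) = a) ∧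
    p = ∏' j, ‖lam j‖ } with hS
  -- the lower bound
  have hlower : ∀ p ∈ S, r ≤ p := by
    rintro p ⟨lam, hinj, hball, ⟨φ, ⟨hφd, hφm⟩, hφ0, hφa⟩, rfl⟩
    apply le_tprod_of_finset _ _ hr1.le
    intro s
    have hmapsφ : ∀ x ∈ ball (0:ℂ) 1, ‖φ x‖ < 1 := fun x hx =>
      mem_ball_iff_abs.mp (hφm hx)
    have hfd : DifferentiableOn ℂ (fun x => mo a (φ x)) (ball 0 1) :=
      mo_comp_differentiableOn haa hφd hmapsφ
    have hfm : MapsTo (fun x => mo a (φ x)) (ball (0:ℂ) 1) (closedBall (0:ℂ) 1) := by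
      intro x hx
      exact mem_closedBall_zero_iff.mpr (abs_mo_lt_one haa (hmapsφ x hx)).le
    have hmem : ∀ x ∈ s.image lam, x ∈ ball (0:ℂ) 1 := by
      intro x hx
      rcases Finset.mem_image.mp hx with ⟨j, _, rfl⟩
      exact hball j
    have hzero : ∀ x ∈ s.image lam, mo a (φ x) = 0 := by
      intro x hx
      rcases Finset.mem_image.mp hx with ⟨j, _, rfl⟩
      rw [hφa j, mo_self]
    have := blaschke_bound (s.image lam).card (s.image lam) rfl _ hfd hfm hmem hzero 0
      (mem_ball_self one_pos)
    rw [hφ0] at this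
    calc r ≤ ∏ x ∈ s.image lam, ‖mo x 0‖ := this
    _ = ∏ x ∈ s.image lam, ‖x‖ := by
        apply Finset.prod_congr rfl
        intro x _
        rw [mo_zero]
    _ = ∏ j ∈ s, ‖lam j‖ := Finset.prod_image (fun x _ y _ h => hinj h)
  have hbdd : BddBelow S := ⟨r, fun p hp => hlower p hp⟩
  -- upper bound constructions
  have hupper : ∀ ε : ℝ, 0 < ε → ∃ p ∈ S, p ≤ r + ε := by
    intro ε hε
    have hj0lt : ((0:ℕ) : ℕ∞) < N := by
      rw [Nat.cast_zero]; exact zero_lt_one.trans_le hN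
    by_cases haz : a = z
    · -- constant map, one of the points is 0
      refine ⟨0, ?_, by positivity⟩
      refine ⟨fun j => (((j.1:ℝ)/(j.1+2) : ℝ) : ℂ), ?_, ?_,
        ⟨fun _ => a, ⟨differentiableOn_const _, fun _ _ => ha⟩, haz, fun _ => rfl⟩, ?_⟩
      · have hsm : StrictMono (fun n : ℕ => (n:ℝ)/(n+2)) := by
          intro m n hmn
          rw [div_lt_div_iff₀ (by positivity) (by positivity)]
          have : (m:ℝ) < n := by exact_mod_cast hmn
          push_cast
          nlinarith
        intro j k hjk
        have h1 : ((j.1:ℝ)/(j.1+2)) = ((k.1:ℝ)/(k.1+2)) := Complex.ofReal_inj.mp hjk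
        exact Subtype.ext (hsm.injective h1)
      · intro j
        rw [mem_ball_iff_abs, Complex.norm_real, Real.norm_eq_abs, abs_of_nonneg (by positivity),
          div_lt_one (by positivity)]
        linarith [(le_refl (j.1:ℝ))]
      · symm
        apply HasProd.tprod_eq
        apply hasProd_zero_of_eq_zero _ (⟨0, hj0lt⟩ : {j : ℕ // (j : ℕ∞) < N})
        norm_num
    · -- a ≠ z
      set w : ℂ := mo a z with hw
      have hwne : w ≠ 0 := by
        rw [hw, Ne, mo_eq_zero_iff haa hza]
        exact fun h => haz h.symm
      have hrpos : 0 < r := norm_pos_iff.mpr hwne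
      have habsw : ‖w‖ < 1 := hr1
      rcases eq_or_ne N ⊤ with hT | hT
      · -- infinitely many points: N = ⊤
        have hltN : ∀ j : ℕ, ((j:ℕ∞)) < N := by
          intro j
          rw [hT]
          exact lt_top_iff_ne_top.mpr (ENat.coe_ne_top j)
        set v : ℝ := Real.exp (-1) with hv
        have hv0 : 0 < v := Real.exp_pos _
        have hv1 : v < 1 := by
          rw [hv, ← Real.exp_zero]
          exact Real.exp_lt_exp.mpr (by norm_num)
        set τf : ℝ → ℝ := fun t => (t - v)/(1 - t*v) with hτf
        have hτf1 : τf 1 = 1 := by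
          rw [hτf]; simp only [one_mul]; exact div_self (sub_ne_zero.mpr hv1.ne')
        have hcont : Tendsto τf (nhdsWithin 1 (Iio 1)) (𝓝 1) := by
          have h1 : ContinuousAt τf 1 := by
            apply ContinuousAt.div
            · exact (continuous_id.sub continuous_const).continuousAt
            · exact (continuous_const.sub (continuous_id.mul continuous_const)).continuousAt
            · simp only [one_mul]
              exact sub_ne_zero.mpr hv1.ne'
          have h2 := h1.tendsto
          rw [hτf1] at h2
          exact h2.mono_left nhdsWithin_le_nhds
        have hlog : Tendsto (fun t : ℝ => Real.log t) (nhdsWithin 1 (Iio 1)) (𝓝 0) := by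
          have h1 := (Real.continuousAt_log one_ne_zero).tendsto
          rw [Real.log_one] at h1
          exact h1.mono_left nhdsWithin_le_nhds
        have hdivt : Tendsto (fun t => r / τf t) (nhdsWithin 1 (Iio 1)) (𝓝 r) := by
          have h1 := (tendsto_const_nhds (x := r) (f := nhdsWithin (1:ℝ) (Iio 1))).div
            hcont one_ne_zero
          simpa [Pi.div_def] using h1
        have hrhs : Tendsto (fun t : ℝ => (1 + Real.log t)/(1 - Real.log t))
            (nhdsWithin 1 (Iio 1)) (𝓝 1) := by
          have h1 := ((tendsto_const_nhds (x := (1:ℝ))).add hlog).div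
            ((tendsto_const_nhds (x := (1:ℝ))).sub hlog) (by norm_num)
          simpa [Pi.div_def] using h1
        have hEv : ∀ᶠ t in nhdsWithin (1:ℝ) (Iio 1), (v < t ∧ t < 1) ∧ r < τf t ∧
            r / τf t < r + ε ∧ r / τf t < (1 + Real.log t)/(1 - Real.log t) := by
          filter_upwards [eventually_nhdsWithin_of_eventually_nhds (eventually_gt_nhds hv1),
            eventually_mem_nhdsWithin,
            hcont.eventually (eventually_gt_nhds hr1),
            hdivt.eventually (eventually_lt_nhds (by linarith : r < r + ε)),
            hdivt.eventually_lt hrhs hr1] with t h1 h2 h3 h4 h5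
          exact ⟨⟨h1, h2⟩, h3, h4, h5⟩
        obtain ⟨t, ⟨hvt, ht1⟩, hrτ, hτε, hτρ⟩ := hEv.exists
        have ht0 : 0 < t := hv0.trans hvt
        set L : ℝ := Real.log t with hLdef
        have hL0 : L < 0 := Real.log_neg ht0 ht1
        have hL1 : -1 < L := by
          have h1 := Real.log_lt_log hv0 hvt
          rwa [hv, Real.log_exp] at h1
        set τ : ℝ := τf t with hτdef
        have hτpos : 0 < τ := by
          rw [hτdef, hτf]
          apply div_pos (by linarith)
          nlinarith
        have hρ0lt1 : (1 + L)/(1 - L) < 1 := by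
          rw [div_lt_one (by linarith)]; linarith
        set w' : ℂ := w / (τ:ℂ) with hw'
        have hw'abs : ‖w'‖ = r / τ := by
          rw [hw', norm_div, Complex.norm_real, Real.norm_eq_abs, abs_of_pos hτpos, hrdef]
        have hw'lt1 : ‖w'‖ < 1 := by
          rw [hw'abs]; linarith
        set μk : ℕ → ℂ := fun m => ((L:ℝ):ℂ) + ((2*Real.pi*m : ℝ):ℂ) * Complex.I with hμk
        have hμre : ∀ m, (μk m).re = L := by
          intro m; simp [hμk]
        have hμim : ∀ m, (μk m).im = 2*Real.pi*m := by
          intro m; simp [hμk]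
        have hμne1 : ∀ m : ℕ, 0 < m → μk m ≠ 1 := by
          intro m hm h
          have h2 := congrArg Complex.im h
          rw [hμim] at h2
          simp only [Complex.one_im] at h2
          have hπ := Real.pi_pos
          have hm' : (0:ℝ) < m := by exact_mod_cast hm
          nlinarith
        set lamN : ℕ → ℂ := fun k => if k = 0 then w' else cay (μk k) with hlamN
        have hlam0 : lamN 0 = w' := by simp [hlamN]
        have hlamS : ∀ m : ℕ, lamN (m+1) = cay (μk (m+1)) := by
          intro m; simp [hlamN]
        have hcayre : ∀ m : ℕ, (μk m).re < 0 := fun m => by rw [hμre]; exact hL0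
        have hcayabs : ∀ m : ℕ, ‖cay (μk m)‖ < 1 := fun m => cay_abs_lt_one (hcayre m)
        have hcayge : ∀ m : ℕ, (1 + L)/(1 - L) ≤ ‖cay (μk m)‖ := by
          intro m
          have h1 := cay_abs_ge (hcayre m) (by rw [hμre]; linarith)
          rwa [hμre] at h1
        have hballN : ∀ k, ‖lamN k‖ < 1 := by
          intro k
          cases k with
          | zero => rw [hlam0]; exact hw'lt1
          | succ m => rw [hlamS]; exact hcayabs _
        have hw'small : ‖w'‖ < (1 + L)/(1 - L) := by
          rw [hw'abs]; exact hτρ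
        have hinjN : Function.Injective lamN := by
          intro k k' h
          cases k with
          | zero =>
            cases k' with
            | zero => rfl
            | succ m =>
              exfalso
              rw [hlam0, hlamS] at h
              have h1 := hcayge (m+1)
              rw [← h] at h1
              linarith [hw'small]
          | succ m =>
            cases k' with
            | zero =>
              exfalso
              rw [hlamS, hlam0] at h
              have h1 := hcayge (m+1)
              rw [h] at h1
              linarith [hw'small]
            | succ m' =>
              rw [hlamS, hlamS] at h
              have h1 := cay_inj (hμne1 (m+1) (Nat.succ_pos m)) (hμne1 (m'+1) (Nat.succ_pos m')) h
              have h2 := congrArg Complex.im h1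
              rw [hμim, hμim] at h2
              have hπ := Real.pi_pos
              have h3 := mul_left_cancel₀ (show (2*Real.pi) ≠ 0 by positivity) h2
              have h4 : m + 1 = m' + 1 := by exact_mod_cast h3
              omega
        set q : ℂ → ℂ := fun x => Complex.exp ((x + 1)/(x - 1)) with hq
        have hqabs : ∀ x ∈ ball (0:ℂ) 1, ‖q x‖ < 1 := by
          intro x hx
          rw [hq]
          simp only
          rw [Complex.norm_exp, ← Real.exp_zero]
          exact Real.exp_lt_exp.mpr (re_pre_neg (mem_ball_iff_abs.mp hx))
        have hqdiff : DifferentiableOn ℂ q (ball (0:ℂ) 1) := by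
          apply DifferentiableOn.cexp
          apply DifferentiableOn.div
          · exact (differentiableOn_id (𝕜 := ℂ)).add_const 1
          · exact (differentiableOn_id (𝕜 := ℂ)).sub_const 1
          · intro x hx hcon
            rw [sub_eq_zero] at hcon
            rw [hcon] at hx
            rw [mem_ball_iff_abs] at hx
            simp at hx
        have ht'abs : ‖((t:ℝ):ℂ)‖ < 1 := by
          rw [Complex.norm_real, Real.norm_eq_abs, abs_of_pos ht0]; exact ht1
        set f : ℂ → ℂ := fun x => mo w' x * mo ((t:ℝ):ℂ) (q x) with hf
        have hfabs : ∀ x ∈ ball (0:ℂ) 1, ‖f x‖ < 1 := by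
          intro x hx
          rw [hf]
          simp only [norm_mul]
          have h1 := abs_mo_lt_one hw'lt1 (mem_ball_iff_abs.mp hx)
          have h2 := abs_mo_lt_one ht'abs (hqabs x hx)
          nlinarith [norm_nonneg (mo w' x), norm_nonneg (mo ((t:ℝ):ℂ) (q x))]
        have hfdiff : DifferentiableOn ℂ f (ball (0:ℂ) 1) := by
          apply DifferentiableOn.mul
          · have h1 := mo_comp_differentiableOn hw'lt1 (differentiableOn_id (𝕜 := ℂ))
              (fun x hx => mem_ball_iff_abs.mp hx)
            simpa using h1
          · exact mo_comp_differentiableOn ht'abs hqdiff hqabs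
        set φ : ℂ → ℂ := fun x => mo a (f x) with hφ
        have hφdiff : DifferentiableOn ℂ φ (ball (0:ℂ) 1) :=
          mo_comp_differentiableOn haa hfdiff hfabs
        have hφmaps : MapsTo φ (ball (0:ℂ) 1) (ball (0:ℂ) 1) := fun x hx =>
          mem_ball_iff_abs.mpr (abs_mo_lt_one haa (hfabs x hx))
        have hq0 : q 0 = ((v:ℝ):ℂ) := by
          rw [hq]
          simp only
          have h1 : ((0:ℂ) + 1)/((0:ℂ) - 1) = -1 := by norm_num
          rw [h1, hv, Complex.ofReal_exp]
          norm_num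
        have hmotv : mo ((t:ℝ):ℂ) ((v:ℝ):ℂ) = ((τ:ℝ):ℂ) := by
          rw [mo, Complex.conj_ofReal, hτdef, hτf]
          push_cast
          ring_nf
        have hτC : ((τ:ℝ):ℂ) ≠ 0 := Complex.ofReal_ne_zero.mpr hτpos.ne'
        have hφ0 : φ 0 = z := by
          rw [hφ, hf]
          simp only
          rw [mo_zero, hq0, hmotv, hw', div_mul_cancel₀ _ hτC]
          exact mo_mo haa hza
        have hqcay : ∀ m : ℕ, q (cay (μk (m+1))) = ((t:ℝ):ℂ) := by
          intro m
          rw [hq]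
          simp only
          rw [cay_arg (hμne1 (m+1) (Nat.succ_pos m)), hμk]
          simp only
          rw [Complex.exp_add]
          have e1 : Complex.exp ((L:ℝ):ℂ) = ((t:ℝ):ℂ) := by
            rw [← Complex.ofReal_exp, hLdef, Real.exp_log ht0]
          have e2 : Complex.exp (((2*Real.pi*((m+1):ℕ) : ℝ):ℂ) * Complex.I) = 1 := by
            have h1 : (((2*Real.pi*((m+1):ℕ) : ℝ):ℂ) * Complex.I)
                = (((m+1:ℕ):ℤ):ℂ) * (2*(Real.pi:ℂ)*Complex.I) := by
              push_cast
              ring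
            rw [h1, Complex.exp_int_mul_two_pi_mul_I]
          rw [e1, e2, mul_one]
        have hφa : ∀ k : ℕ, φ (lamN k) = a := by
          intro k
          cases k with
          | zero =>
            rw [hφ, hf, hlam0]
            simp only
            rw [mo_self, zero_mul, mo_zero]
          | succ m =>
            rw [hφ, hf, hlamS]
            simp only
            rw [hqcay, mo_self, mul_zero, mo_zero]
        set lam : {j : ℕ // (j : ℕ∞) < N} → ℂ := fun j => lamN j.1 with hlamdef
        have hinj : Function.Injective lam := by
          intro j k h
          exact Subtype.ext (hinjN h)
        have hball : ∀ j, lam j ∈ ball (0:ℂ) 1 := fun j => mem_ball_iff_abs.mpr (hballN j.1)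
        refine ⟨∏' j, ‖lam j‖,
          ⟨lam, hinj, hball, ⟨φ, ⟨hφdiff, hφmaps⟩, hφ0, fun j => hφa j.1⟩, rfl⟩, ?_⟩
        have hle := tprod_le_single (fun j => ‖lam j‖) ⟨0, hltN 0⟩
          (fun j => norm_nonneg _) (fun j => (mem_ball_iff_abs.mp (hball j)).le)
        calc (∏' j, ‖lam j‖) ≤ ‖lam ⟨0, hltN 0⟩‖ := hle
        _ = r / τ := by rw [hlamdef]; simp only; rw [hlam0, hw'abs]
        _ ≤ r + ε := hτε.le
      · -- finitely many points
        obtain ⟨n, hn⟩ := WithTop.ne_top_iff_exists.mp hT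
        have hn' : (n:ℕ∞) = N := by exact_mod_cast hn
        have hn1 : 1 ≤ n := by
          have h2 : ((1:ℕ):ℕ∞) ≤ (n:ℕ∞) := by rw [Nat.cast_one, hn']; exact hN
          exact_mod_cast h2
        have hn0 : n ≠ 0 := by omega
        have hlt_n : ∀ j : {j : ℕ // (j : ℕ∞) < N}, j.1 < n := by
          intro j
          have h2 : ((j.1:ℕ):ℕ∞) < (n:ℕ∞) := lt_of_lt_of_eq j.2 hn'.symm
          exact_mod_cast h2
        set ρ : ℝ := r ^ ((n:ℝ)⁻¹) with hρ
        have hρpos : 0 < ρ := Real.rpow_pos_of_pos hrpos _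
        have hρlt : ρ < 1 := Real.rpow_lt_one hr0 hr1 (by positivity)
        have hρpow : ρ^n = r := Real.rpow_inv_natCast_pow hr0 hn0
        set ζ : ℂ := Complex.exp (2 * (Real.pi:ℂ) * Complex.I / n) with hζ
        have hprim : IsPrimitiveRoot ζ n := Complex.isPrimitiveRoot_exp n hn0
        have habsζ : ‖ζ‖ = 1 := by
          rw [hζ, Complex.norm_exp]
          have : (2 * (Real.pi:ℂ) * Complex.I / n) = ((2*Real.pi/n : ℝ):ℂ) * Complex.I := by
            push_cast; ring
          rw [this]
          simp
        set lam : {j : ℕ // (j : ℕ∞) < N} → ℂ := fun j => (ρ:ℂ) * ζ^j.1 with hlam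
        have habs_lam : ∀ j, ‖lam j‖ = ρ := by
          intro j
          rw [hlam]
          simp only [norm_mul, norm_pow, habsζ, one_pow, mul_one, Complex.norm_real, Real.norm_eq_abs]
          exact abs_of_nonneg hρpos.le
        have hinj : Function.Injective lam := by
          intro j k hjk
          rw [hlam] at hjk
          simp only at hjk
          have hρC : (ρ:ℂ) ≠ 0 := Complex.ofReal_ne_zero.mpr hρpos.ne'
          have := mul_left_cancel₀ hρC hjk
          exact Subtype.ext (hprim.pow_inj (hlt_n j) (hlt_n k) this)
        have hrC : (r:ℂ) ≠ 0 := Complex.ofReal_ne_zero.mpr hrpos.ne'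
        set φ : ℂ → ℂ := fun x => mo a (mo w ((w / (r:ℂ)) * x ^ n)) with hφ
        have hinner_abs : ∀ x : ℂ, ‖(w / (r:ℂ)) * x ^ n‖ = ‖x‖ ^ n := by
          intro x
          rw [norm_mul, norm_div, norm_pow, Complex.norm_real, Real.norm_eq_abs, abs_of_nonneg hr0]
          rw [show ‖w‖ = r from rfl, div_self hrpos.ne', one_mul]
        have hinner_lt : ∀ x ∈ ball (0:ℂ) 1, ‖(w / (r:ℂ)) * x ^ n‖ < 1 := by
          intro x hx
          rw [hinner_abs]
          exact pow_lt_one₀ (norm_nonneg x) (mem_ball_iff_abs.mp hx) hn0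
        have hinner_diff : DifferentiableOn ℂ (fun x => mo w ((w / (r:ℂ)) * x ^ n))
            (ball (0:ℂ) 1) := by
          apply mo_comp_differentiableOn habsw
          · exact (differentiableOn_const _).mul
              ((differentiableOn_id (𝕜 := ℂ)).pow n)
          · exact hinner_lt
        have hinner_ball : ∀ x ∈ ball (0:ℂ) 1,
            ‖mo w ((w / (r:ℂ)) * x ^ n)‖ < 1 := fun x hx =>
          abs_mo_lt_one habsw (hinner_lt x hx)
        have hφdiff : DifferentiableOn ℂ φ (ball (0:ℂ) 1) :=
          mo_comp_differentiableOn haa hinner_diff hinner_ball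
        have hφmaps : MapsTo φ (ball (0:ℂ) 1) (ball (0:ℂ) 1) := by
          intro x hx
          exact mem_ball_iff_abs.mpr (abs_mo_lt_one haa (hinner_ball x hx))
        have hφ0 : φ 0 = z := by
          rw [hφ]
          simp only [zero_pow hn0, mul_zero, mo_zero]
          exact mo_mo haa hza
        have hφa : ∀ j, φ (lam j) = a := by
          intro j
          rw [hφ, hlam]
          simp only
          rw [mul_pow, ← pow_mul, mul_comm j.1 n, pow_mul, hprim.pow_eq_one, one_pow, mul_one,
            ← Complex.ofReal_pow, hρpow, div_mul_cancel₀ _ hrC, mo_self, mo_zero]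
        have htp : (∏' j, ‖lam j‖) = r := by
          have e : Fin n ≃ {j : ℕ // (j : ℕ∞) < N} :=
            { toFun := fun i => ⟨i.1, lt_of_lt_of_eq (by exact_mod_cast i.2) hn'⟩
              invFun := fun j => ⟨j.1, hlt_n j⟩
              left_inv := fun i => rfl
              right_inv := fun j => rfl }
          rw [← Equiv.tprod_eq e (fun j => ‖lam j‖), tprod_fintype]
          calc ∏ i : Fin n, ‖lam (e i)‖ = ∏ _i : Fin n, ρ :=
              Finset.prod_congr rfl (fun i _ => habs_lam _)
          _ = ρ ^ n := by rw [Finset.prod_const, Finset.card_univ, Fintype.card_fin]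
          _ = r := hρpow
        refine ⟨r, ⟨lam, hinj, ?_, ⟨φ, ⟨hφdiff, hφmaps⟩, hφ0, hφa⟩, htp.symm⟩, by linarith⟩
        intro j
        rw [mem_ball_iff_abs, habs_lam]
        exact hρlt
  have hne : S.Nonempty := by
    obtain ⟨p, hp, _⟩ := hupper 1 one_pos
    exact ⟨p, hp⟩
  apply le_antisymm
  · apply le_of_forall_pos_le_add
    intro ε hε
    obtain ⟨p, hp, hple⟩ := hupper ε hε
    exact le_trans (csInf_le hbdd hp) hple
  · exact le_csInf hne hlower
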